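/- Let g : ℝ → ℝ be continuous on [0,1], let σ_t² := ∫_0^t g(τ)² dτ, σ̄_t² := ∫_t^1 g(τ)² dτ, and C := ∫_0^1 g(τ)² dτ; assume C > 0 and σ̄_t² > 0 for every t ∈ (0,1). Define α_t := σ̄_t²/(σ_t² + σ̄_t²) and β_t := σ_t²·σ̄_t²/(σ_t² + σ̄_t²). Then α_t²/β_t = σ̄_t²/(C·σ_t²) for t ∈ (0,1) with σ_t² > 0, and α_t²/β_t tends to 0 as t tends to 1 from the left. (The Schrödinger-bridge schedule of SDB satisfies the second hypothesis lim_{t→1} α_t²/β_t = 0 of Theorem 3.) -/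

import Mathlib

open Filter

/-- The Schrödinger-bridge schedule of SDB satisfies the second hypothesis
`lim_{t→1} α_t²/β_t = 0` of Theorem 3. -/
theorem sdb_sb_alpha_sq_over_beta_limit (g : ℝ → ℝ) (hg : ContinuousOn g (Set.Icc 0 1))
    (σ σb : ℝ → ℝ) (C : ℝ)
    (hσ : ∀ t : ℝ, σ t = ∫ τ in (0:ℝ)..t, (g τ) ^ 2)
    (hσb : ∀ t : ℝ, σb t = ∫ τ in t..(1:ℝ), (g τ) ^ 2)
    (hC : C = ∫ τ in (0:ℝ)..(1:ℝ), (g τ) ^ 2) (hCpos : 0 < C)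
    (hσbpos : ∀ t ∈ Set.Ioo (0:ℝ) 1, 0 < σb t)
    (α β : ℝ → ℝ)
    (hα : ∀ t : ℝ, α t = σb t / (σ t + σb t))
    (hβ : ∀ t : ℝ, β t = σ t * σb t / (σ t + σb t)) :
    (∀ t ∈ Set.Ioo (0:ℝ) 1, 0 < σ t → (α t) ^ 2 / β t = σb t / (C * σ t)) ∧
      Tendsto (fun t => (α t) ^ 2 / β t) (nhdsWithin 1 (Set.Iio 1)) (nhds 0) := by
  have hgc : ContinuousOn (fun τ => (g τ) ^ 2) (Set.Icc 0 1) := hg.pow 2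
  have huicc : Set.uIcc (0:ℝ) 1 = Set.Icc 0 1 := Set.uIcc_of_le (by norm_num)
  have hInt : IntervalIntegrable (fun τ => (g τ) ^ 2) MeasureTheory.volume 0 1 :=
    ContinuousOn.intervalIntegrable (huicc ▸ hgc)
  have hsum : ∀ t ∈ Set.Icc (0:ℝ) 1, σ t + σb t = C := by
    intro t ht
    rw [hσ, hσb, hC]
    have h1 : IntervalIntegrable (fun τ => (g τ) ^ 2) MeasureTheory.volume 0 t := by
      apply hInt.mono_set
      rw [Set.uIcc_of_le ht.1, huicc]
      exact Set.Icc_subset_Icc le_rfl ht.2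
    have h2 : IntervalIntegrable (fun τ => (g τ) ^ 2) MeasureTheory.volume t 1 := by
      apply hInt.mono_set
      rw [Set.uIcc_of_le ht.2, huicc]
      exact Set.Icc_subset_Icc ht.1 le_rfl
    exact intervalIntegral.integral_add_adjacent_intervals h1 h2
  have key : ∀ t ∈ Set.Ioo (0:ℝ) 1, 0 < σ t → (α t) ^ 2 / β t = σb t / (C * σ t) := by
    intro t ht hσpos
    have hb := hσbpos t ht
    have hs := hsum t (Set.mem_Icc_of_Ioo ht)
    rw [hα, hβ, hs]
    field_simp
  refine ⟨key, ?_⟩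
  -- continuity of σ on [0,1]
  have hσcont : ContinuousOn σ (Set.Icc 0 1) := by
    have h0 : (0:ℝ) ∈ Set.uIcc (0:ℝ) 1 := Set.left_mem_uIcc
    have hc := intervalIntegral.continuousOn_primitive_interval' hInt h0
    rw [huicc] at hc
    exact hc.congr (fun t _ => hσ t)
  have hσ1 : σ 1 = C := by rw [hσ 1, hC]
  have hle : nhdsWithin (1:ℝ) (Set.Iio 1) ≤ nhdsWithin 1 (Set.Icc 0 1) := by
    rw [← nhdsWithin_Ico_eq_nhdsLT (by norm_num : (0:ℝ) < 1)]
    exact nhdsWithin_mono _ Set.Ico_subset_Icc_self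
  have hσtend : Tendsto σ (nhdsWithin (1:ℝ) (Set.Iio 1)) (nhds C) := by
    have := (hσcont 1 (by norm_num)).tendsto
    rw [hσ1] at this
    exact this.mono_left hle
  have hσbtend : Tendsto σb (nhdsWithin (1:ℝ) (Set.Iio 1)) (nhds 0) := by
    have h1 : Tendsto (fun t => C - σ t) (nhdsWithin (1:ℝ) (Set.Iio 1)) (nhds 0) := by
      have h2 : Tendsto (fun t => C - σ t) (nhdsWithin (1:ℝ) (Set.Iio 1)) (nhds (C - C)) :=
        (tendsto_const_nhds (x := C)).sub hσtend
      simpa using h2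
    apply h1.congr'
    filter_upwards [Ioo_mem_nhdsLT_of_mem (by norm_num : (1:ℝ) ∈ Set.Ioc 0 1)] with t ht
    have := hsum t (Set.mem_Icc_of_Ioo ht)
    linarith
  have hmem : ∀ᶠ t in nhdsWithin (1:ℝ) (Set.Iio 1), t ∈ Set.Ioo (0:ℝ) 1 :=
    Ioo_mem_nhdsLT_of_mem (by norm_num : (1:ℝ) ∈ Set.Ioc 0 1)
  have hσev : ∀ᶠ t in nhdsWithin (1:ℝ) (Set.Iio 1), 0 < σ t :=
    hσtend.eventually (eventually_gt_nhds hCpos)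
  have hfin : Tendsto (fun t => σb t / (C * σ t)) (nhdsWithin (1:ℝ) (Set.Iio 1)) (nhds 0) := by
    have hden : Tendsto (fun t => C * σ t) (nhdsWithin (1:ℝ) (Set.Iio 1)) (nhds (C * C)) :=
      tendsto_const_nhds.mul hσtend
    have := hσbtend.div hden (ne_of_gt (mul_pos hCpos hCpos))
    simpa only [zero_div, Pi.div_def] using this
  apply hfin.congr'
  filter_upwards [hmem, hσev] with t ht hs
  exact (key t ht hs).symm
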